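/- arXiv:2007.01237 — 2 statements merged into one kernel-verified Lean document; each statement's English description precedes it below -/
import Mathlib

section
/- Let T1 and T2 be independent real-valued random variables, each with distribution symmetric about 0 (i.e., T_i and -T_i have the same law). Let f : ℝ≥0 × ℝ≥0 → ℝ≥0 be any measurable function. Then the mirror statistic M = sign(T1·T2) · f(|T1|, |T2|) has distribution symmetric about 0, i.e., for every t, P(M > t) = P(M < -t). -/
open MeasureTheory ProbabilityTheory
open scoped NNReal ENNReal

lemma measurable_real_sign : Measurable Real.sign := by
  unfold Real.sign
  exact Measurable.ite measurableSet_Iio measurable_const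
    (Measurable.ite measurableSet_Ioi measurable_const measurable_const)

/-- If `T1` and `T2` are independent real random variables, each symmetric about 0,
then for any measurable `f : ℝ≥0 × ℝ≥0 → ℝ≥0`, the mirror statistic
`M = sign(T1 T2) * f(|T1|, |T2|)` is symmetric about 0: `P(M > t) = P(M < -t)` for all `t`. -/
theorem mirror_statistic_symmetric
    {Ω : Type*} [MeasurableSpace Ω] (P : Measure Ω) [IsProbabilityMeasure P]
    (T1 T2 : Ω → ℝ) (hT1 : Measurable T1) (hT2 : Measurable T2)
    (hindep : IndepFun T1 T2 P)
    (hsym1 : Measure.map T1 P = Measure.map (fun ω => -T1 ω) P)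
    (hsym2 : Measure.map T2 P = Measure.map (fun ω => -T2 ω) P)
    (f : ℝ≥0 × ℝ≥0 → ℝ≥0) (hf : Measurable f)
    (M : Ω → ℝ)
    (hM : ∀ ω, M ω = Real.sign (T1 ω * T2 ω) * (f (Real.nnabs (T1 ω), Real.nnabs (T2 ω)) : ℝ)) :
    ∀ t : ℝ, P {ω | M ω > t} = P {ω | M ω < -t} := by
  intro t
  -- define g
  set g : ℝ × ℝ → ℝ := fun p => Real.sign (p.1 * p.2) * (f (Real.nnabs p.1, Real.nnabs p.2) : ℝ)
    with hg
  have hgm : Measurable g := by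
    apply Measurable.mul
    · exact measurable_real_sign.comp (measurable_fst.mul measurable_snd)
    · have hnn : Measurable Real.nnabs := by
        refine Measurable.subtype_mk ?_
        simpa [Real.coe_nnabs] using (measurable_id.abs (α := ℝ))
      exact measurable_coe_nnreal_real.comp (hf.comp
        ((hnn.comp measurable_fst).prodMk (hnn.comp measurable_snd)))
  have hgneg : ∀ p : ℝ × ℝ, g (-p.1, p.2) = - g p := by
    intro p
    simp only [hg]
    have habs : Real.nnabs (-p.1) = Real.nnabs p.1 := by
      ext; simp [Real.coe_nnabs]
    rw [neg_mul, Real.sign_neg, habs]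
    ring
  -- negated T1 is also independent of T2
  have hindep' : IndepFun (fun ω => -T1 ω) T2 P := hindep.comp measurable_neg measurable_id
  have hmap : P.map (fun ω => (T1 ω, T2 ω)) = P.map (fun ω => (-T1 ω, T2 ω)) := by
    rw [(indepFun_iff_map_prod_eq_prod_map_map hT1.aemeasurable hT2.aemeasurable).mp hindep,
      (indepFun_iff_map_prod_eq_prod_map_map hT1.fun_neg.aemeasurable hT2.aemeasurable).mp hindep',
      hsym1]
  have key : ∀ s : Set ℝ, MeasurableSet s →
      P {ω | g (T1 ω, T2 ω) ∈ s} = P {ω | g (-T1 ω, T2 ω) ∈ s} := by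
    intro s hs
    have h1 := Measure.map_apply (hT1.prodMk hT2) (hgm hs) (μ := P)
    have h2 := Measure.map_apply (hT1.fun_neg.prodMk hT2) (hgm hs) (μ := P)
    have : (P.map (fun ω => (T1 ω, T2 ω))) (g ⁻¹' s)
        = (P.map (fun ω => (-T1 ω, T2 ω))) (g ⁻¹' s) := by rw [hmap]
    rw [h1, h2] at this
    exact this
  have hMg : ∀ ω, M ω = g (T1 ω, T2 ω) := fun ω => hM ω
  have := key {x | x > t} measurableSet_Ioi
  calc P {ω | M ω > t} = P {ω | g (T1 ω, T2 ω) ∈ {x | x > t}} := by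
        congr 1; ext ω; simp [hMg ω]
    _ = P {ω | g (-T1 ω, T2 ω) ∈ {x | x > t}} := this
    _ = P {ω | M ω < -t} := by
        congr 1; ext ω
        simp only [Set.mem_setOf_eq, hgneg (T1 ω, T2 ω), hMg ω]
        constructor <;> intro h <;> linarith
end

section
/- (Mehler's identity consequence) Let (X, Y) be bivariate normal with standard normal marginals and correlation r ∈ (−1, 1), with joint CDF Φ_r. Then for all t1, t2, |Φ_r(t1, t2) − Φ(t1)Φ(t2)| ≤ K·|r| for a universal constant K, where Φ is the standard normal CDF. In particular, sup_{t1,t2} |Φ_r(t1,t2) − Φ(t1)Φ(t2)| → 0 as r → 0. -/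
open MeasureTheory ProbabilityTheory Real Set

lemma mehler_pdf_le_exp (x : ℝ) : gaussianPDFReal 0 1 x ≤ rexp (-(x^2)/2) := by
  unfold gaussianPDFReal
  have h1 : (Real.sqrt (2 * π * (1:NNReal)))⁻¹ ≤ 1 := by
    rw [inv_le_one_iff₀]
    right
    rw [show ((1:NNReal):ℝ) = 1 by norm_num, mul_one]
    nlinarith [Real.sq_sqrt (by positivity : (0:ℝ) ≤ 2*π), Real.sqrt_nonneg (2*π), Real.pi_gt_three]
  calc (Real.sqrt (2 * π * (1:NNReal)))⁻¹ * rexp (-(x - 0)^2 / (2*(1:NNReal)))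
      ≤ 1 * rexp (-(x - 0)^2 / (2*(1:NNReal))) := by
        gcongr
    _ = rexp (-(x^2)/2) := by norm_num

lemma mehler_pdf_le_one (x : ℝ) : gaussianPDFReal 0 1 x ≤ 1 := by
  refine (mehler_pdf_le_exp x).trans ?_
  rw [Real.exp_le_one_iff, neg_div]
  simp [div_nonneg (sq_nonneg x)]

lemma mehler_cdf_diff_eq (u v : ℝ) (huv : u ≤ v) :
    cdf (gaussianReal 0 1) v - cdf (gaussianReal 0 1) u
      = ((gaussianReal 0 1) (Ioc u v)).toReal := by
  rw [cdf_eq_real, cdf_eq_real, measureReal_def, measureReal_def]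
  have h : (gaussianReal 0 1) (Iic v) = (gaussianReal 0 1) (Iic u) + (gaussianReal 0 1) (Ioc u v) := by
    rw [← measure_union (Iic_disjoint_Ioc le_rfl) measurableSet_Ioc, Iic_union_Ioc_eq_Iic huv]
  rw [h, ENNReal.toReal_add (measure_ne_top _ _) (measure_ne_top _ _)]
  ring

lemma mehler_cdf_diff_le {u v M : ℝ} (huv : u ≤ v) (hM0 : 0 ≤ M)
    (hM : ∀ x ∈ Set.Ioc u v, gaussianPDFReal 0 1 x ≤ M) :
    cdf (gaussianReal 0 1) v - cdf (gaussianReal 0 1) u ≤ M * (v - u) := by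
  rw [mehler_cdf_diff_eq u v huv]
  have h1 : (gaussianReal 0 1) (Ioc u v) ≤ ENNReal.ofReal M * volume (Ioc u v) := by
    rw [gaussianReal_apply 0 one_ne_zero]
    calc ∫⁻ x in Ioc u v, gaussianPDF 0 1 x
        ≤ ∫⁻ _x in Ioc u v, ENNReal.ofReal M := by
          refine setLIntegral_mono measurable_const fun x hx => ?_
          exact ENNReal.ofReal_le_ofReal (hM x hx)
      _ = ENNReal.ofReal M * volume (Ioc u v) := by
          rw [setLIntegral_const, mul_comm]
  calc ((gaussianReal 0 1) (Ioc u v)).toReal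
      ≤ (ENNReal.ofReal M * volume (Ioc u v)).toReal := by
        refine ENNReal.toReal_mono ?_ h1
        rw [Real.volume_Ioc]
        exact ENNReal.mul_ne_top ENNReal.ofReal_ne_top ENNReal.ofReal_ne_top
    _ = M * (v - u) := by
        rw [Real.volume_Ioc, ENNReal.toReal_mul, ENNReal.toReal_ofReal hM0,
          ENNReal.toReal_ofReal (by linarith)]
open MeasureTheory ProbabilityTheory Real Set

lemma mehler_cdf_lipschitz (u v : ℝ) :
    |cdf (gaussianReal 0 1) u - cdf (gaussianReal 0 1) v| ≤ |u - v| := by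
  wlog huv : v ≤ u generalizing u v
  · rw [abs_sub_comm, abs_sub_comm u v]
    exact this v u (le_of_not_ge huv)
  rw [abs_of_nonneg (by linarith [(cdf (gaussianReal 0 1)).mono huv] : (0:ℝ) ≤ _),
    abs_of_nonneg (by linarith : (0:ℝ) ≤ u - v)]
  calc cdf (gaussianReal 0 1) u - cdf (gaussianReal 0 1) v ≤ 1 * (u - v) :=
        mehler_cdf_diff_le huv zero_le_one fun x _ => mehler_pdf_le_one x
    _ = u - v := one_mul _

lemma mehler_mul_exp_le_one (t : ℝ) (ht : 0 ≤ t) : t * rexp (-(t^2)/2) ≤ 1 := by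
  have h := Real.add_one_le_exp (t^2/2)
  have h2 : rexp (-(t^2)/2) = (rexp (t^2/2))⁻¹ := by
    rw [← Real.exp_neg, neg_div]
  rw [h2]
  rw [mul_inv_le_iff₀ (Real.exp_pos _), one_mul]
  nlinarith

lemma mehler_cdf_scale {t s : ℝ} (hs0 : 0 < s) (hs1 : s ≤ 1) :
    |cdf (gaussianReal 0 1) (t / s) - cdf (gaussianReal 0 1) t| ≤ 1 / s - 1 := by
  have hinv : 1 ≤ 1 / s := (one_le_div hs0).mpr hs1
  rcases le_or_gt 0 t with ht | ht
  · -- t ≥ 0, t ≤ t/s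
    have hle : t ≤ t / s := by
      rw [le_div_iff₀ hs0]; nlinarith
    rw [abs_of_nonneg (by linarith [(cdf (gaussianReal 0 1)).mono hle] : (0:ℝ) ≤ _)]
    have hb : ∀ x ∈ Set.Ioc t (t/s), gaussianPDFReal 0 1 x ≤ rexp (-(t^2)/2) := by
      intro x hx
      refine (mehler_pdf_le_exp x).trans ?_
      have : t^2 ≤ x^2 := by nlinarith [hx.1, hx.2]
      apply Real.exp_le_exp.mpr
      rw [neg_div, neg_div, neg_le_neg_iff]
      linarith
    calc cdf (gaussianReal 0 1) (t/s) - cdf (gaussianReal 0 1) t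
        ≤ rexp (-(t^2)/2) * (t/s - t) := mehler_cdf_diff_le hle (Real.exp_nonneg _) hb
      _ = (t * rexp (-(t^2)/2)) * (1/s - 1) := by ring
      _ ≤ 1 * (1/s - 1) := by
          gcongr
          · exact mehler_mul_exp_le_one t ht
      _ = 1/s - 1 := one_mul _
  · -- t < 0, t/s ≤ t
    have hle : t / s ≤ t := by
      rw [div_le_iff₀ hs0]; nlinarith
    rw [abs_sub_comm,
      abs_of_nonneg (by linarith [(cdf (gaussianReal 0 1)).mono hle] : (0:ℝ) ≤ _)]
    have hb : ∀ x ∈ Set.Ioc (t/s) t, gaussianPDFReal 0 1 x ≤ rexp (-(t^2)/2) := by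
      intro x hx
      refine (mehler_pdf_le_exp x).trans ?_
      have : t^2 ≤ x^2 := by nlinarith [hx.1, hx.2]
      apply Real.exp_le_exp.mpr
      rw [neg_div, neg_div, neg_le_neg_iff]
      linarith
    calc cdf (gaussianReal 0 1) t - cdf (gaussianReal 0 1) (t/s)
        ≤ rexp (-(t^2)/2) * (t - t/s) := mehler_cdf_diff_le hle (Real.exp_nonneg _) hb
      _ = ((-t) * rexp (-(t^2)/2)) * (1/s - 1) := by ring
      _ ≤ 1 * (1/s - 1) := by
          gcongr
          · have := mehler_mul_exp_le_one (-t) (by linarith)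
            simpa [neg_sq] using this
      _ = 1/s - 1 := one_mul _
open MeasureTheory ProbabilityTheory Real Set

lemma mehler_integral_Ioi : ∫ x in Ioi (0:ℝ), x * rexp (-(x^2)/2) = 1 := by
  have hd : ∀ x ∈ Ici (0:ℝ), HasDerivAt (fun y : ℝ => -rexp (-(y^2)/2))
      (x * rexp (-(x^2)/2)) x := by
    intro x _
    have h1 : HasDerivAt (fun y : ℝ => -(y^2)/2) (-x) x := by
      have := ((hasDerivAt_pow 2 x).neg).div_const 2
      refine this.congr_deriv ?_
      push_cast
      ring
    have := (h1.exp).neg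
    refine this.congr_deriv ?_
    ring
  have hint : IntegrableOn (fun x : ℝ => x * rexp (-(x^2)/2)) (Ioi 0) := by
    have := (integrable_mul_exp_neg_mul_sq (by norm_num : (0:ℝ) < 1/2)).integrableOn (s := Ioi 0)
    refine this.congr_fun (fun x _ => ?_) measurableSet_Ioi
    rw [neg_div]
    ring_nf
  have htend : Filter.Tendsto (fun y : ℝ => -rexp (-(y^2)/2)) Filter.atTop (nhds 0) := by
    rw [show (0:ℝ) = -0 by norm_num]
    refine Filter.Tendsto.neg ?_
    apply Real.tendsto_exp_atBot.comp
    apply Filter.Tendsto.atBot_div_const (by norm_num : (0:ℝ) < 2)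
    exact Filter.tendsto_neg_atBot_iff.mpr (Filter.tendsto_pow_atTop two_ne_zero)
  have := integral_Ioi_of_hasDerivAt_of_tendsto' (f := fun y : ℝ => -rexp (-(y^2)/2))
    (fun x hx => hd x hx) hint htend
  rw [this]
  norm_num

lemma mehler_integral_abs_exp : ∫ x : ℝ, |x| * rexp (-(x^2)/2) = 2 := by
  have h := integral_comp_abs (f := fun x : ℝ => x * rexp (-(x^2)/2))
  have h2 : ∀ x : ℝ, |x| * rexp (-(|x|^2)/2) = |x| * rexp (-(x^2)/2) := by
    intro x; rw [sq_abs]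
  simp_rw [h2] at h
  rw [h, mehler_integral_Ioi]
  norm_num
open MeasureTheory ProbabilityTheory Real Set
open scoped ENNReal NNReal


lemma mehler_gaussian_eq_withDensity :
    gaussianReal 0 1 = volume.withDensity
      (fun x => ((gaussianPDFReal 0 1 x).toNNReal : ℝ≥0∞)) := by
  rw [gaussianReal_of_var_ne_zero 0 one_ne_zero]
  rfl

lemma mehler_f_meas : Measurable (fun x => (gaussianPDFReal 0 1 x).toNNReal) :=
  (measurable_gaussianPDFReal 0 1).real_toNNReal

lemma mehler_smul_eq (g : ℝ → ℝ) (x : ℝ) :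
    (gaussianPDFReal 0 1 x).toNNReal • g x = gaussianPDFReal 0 1 x * g x := by
  rw [NNReal.smul_def, smul_eq_mul,
    Real.coe_toNNReal _ (gaussianPDFReal_nonneg 0 1 x)]

lemma mehler_integrable_abs : Integrable (fun x => |x|) (gaussianReal 0 1) := by
  rw [mehler_gaussian_eq_withDensity,
    integrable_withDensity_iff_integrable_smul mehler_f_meas]
  have : Integrable (fun x : ℝ => |x| * rexp (-(x^2)/2)) := by
    have h := (integrable_mul_exp_neg_mul_sq (by norm_num : (0:ℝ) < 1/2)).abs
    refine h.congr (Filter.Eventually.of_forall fun x => ?_)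
    show |x * rexp (-(1/2) * x^2)| = |x| * rexp (-(x^2)/2)
    rw [abs_mul, abs_of_nonneg (Real.exp_nonneg _)]
    ring_nf
  refine this.mono' ?_ (Filter.Eventually.of_forall fun x => ?_)
  · exact ((mehler_f_meas.coe_nnreal_real).mul measurable_abs).aestronglyMeasurable
  · rw [mehler_smul_eq (fun x => |x|) x, Real.norm_eq_abs, abs_of_nonneg
      (mul_nonneg (gaussianPDFReal_nonneg 0 1 x) (abs_nonneg x))]
    exact mul_le_mul_of_nonneg_right (mehler_pdf_le_exp x) (abs_nonneg x) |>.trans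
      (le_of_eq (mul_comm _ _))

lemma mehler_integral_abs_le : ∫ x, |x| ∂(gaussianReal 0 1) ≤ 2 := by
  rw [mehler_gaussian_eq_withDensity]
  have h := integral_withDensity_eq_integral_smul (μ := volume) mehler_f_meas (fun x : ℝ => |x|)
  rw [h]
  simp_rw [mehler_smul_eq (fun x => |x|)]
  calc ∫ x : ℝ, gaussianPDFReal 0 1 x * |x|
      ≤ ∫ x : ℝ, |x| * rexp (-(x^2)/2) := by
        refine integral_mono ?_ ?_ fun x => ?_
        · have := mehler_integrable_abs
          rw [mehler_gaussian_eq_withDensity,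
            integrable_withDensity_iff_integrable_smul mehler_f_meas] at this
          refine this.congr (Filter.Eventually.of_forall fun x => ?_)
          exact mehler_smul_eq (fun x => |x|) x
        · have h := (integrable_mul_exp_neg_mul_sq (by norm_num : (0:ℝ) < 1/2)).abs
          refine h.congr (Filter.Eventually.of_forall fun x => ?_)
          show |x * rexp (-(1/2) * x^2)| = |x| * rexp (-(x^2)/2)
          rw [abs_mul, abs_of_nonneg (Real.exp_nonneg _)]
          ring_nf
        · rw [mul_comm]
          exact mul_le_mul_of_nonneg_left (mehler_pdf_le_exp x) (abs_nonneg x)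
    _ = 2 := mehler_integral_abs_exp
open MeasureTheory ProbabilityTheory Real Set
open scoped ENNReal NNReal


/-- (Mehler identity consequence.) For a bivariate normal pair with standard normal marginals
and correlation `r ∈ (-1,1)`, realized as `(Z1, r Z1 + √(1-r²) Z2)` with `Z1, Z2` i.i.d.
standard normal, the joint CDF satisfies `|Φ_r(t1,t2) - Φ(t1)Φ(t2)| ≤ K |r|` for a universal
constant `K`. -/
theorem bivariate_gaussian_cdf_near_independence
    {Ω : Type*} [MeasurableSpace Ω] (P : Measure Ω) [IsProbabilityMeasure P]
    (Z1 Z2 : Ω → ℝ) (hZ1 : Measurable Z1) (hZ2 : Measurable Z2)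
    (hindep : IndepFun Z1 Z2 P)
    (hlaw1 : Measure.map Z1 P = gaussianReal 0 1)
    (hlaw2 : Measure.map Z2 P = gaussianReal 0 1) :
    ∃ K > (0 : ℝ), ∀ r ∈ Set.Ioo (-1 : ℝ) 1, ∀ t1 t2 : ℝ,
      |(P {ω | Z1 ω ≤ t1 ∧ r * Z1 ω + Real.sqrt (1 - r ^ 2) * Z2 ω ≤ t2}).toReal -
        cdf (gaussianReal 0 1) t1 * cdf (gaussianReal 0 1) t2| ≤ K * |r| := by
  refine ⟨6, by norm_num, ?_⟩
  intro r hr t1 t2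
  set s : ℝ := Real.sqrt (1 - r ^ 2) with hs
  have hr2 : r ^ 2 < 1 := by nlinarith [hr.1, hr.2]
  have habs : |r| ≤ 1 := abs_le.mpr ⟨hr.1.le, hr.2.le⟩
  have hs0 : 0 < s := Real.sqrt_pos.mpr (by nlinarith)
  have hssq : s ^ 2 = 1 - r ^ 2 := Real.sq_sqrt (by nlinarith)
  have hs1 : s ≤ 1 := by nlinarith [hs0]
  have h1ms : 1 - s ≤ r ^ 2 := by nlinarith [hs0]
  have hA0 : (0:ℝ) ≤ (P {ω | Z1 ω ≤ t1 ∧ r * Z1 ω + s * Z2 ω ≤ t2}).toReal :=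
    ENNReal.toReal_nonneg
  have hA1 : (P {ω | Z1 ω ≤ t1 ∧ r * Z1 ω + s * Z2 ω ≤ t2}).toReal ≤ 1 := by
    calc (P {ω | Z1 ω ≤ t1 ∧ r * Z1 ω + s * Z2 ω ≤ t2}).toReal
        ≤ (P Set.univ).toReal :=
          ENNReal.toReal_mono (measure_ne_top P _) (measure_mono (Set.subset_univ _))
      _ = 1 := by simp
  have hB0 : (0:ℝ) ≤ cdf (gaussianReal 0 1) t1 * cdf (gaussianReal 0 1) t2 :=
    mul_nonneg (cdf_nonneg _ _) (cdf_nonneg _ _)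
  have hB1 : cdf (gaussianReal 0 1) t1 * cdf (gaussianReal 0 1) t2 ≤ 1 :=
    mul_le_one₀ (cdf_le_one _ _) (cdf_nonneg _ _) (cdf_le_one _ _)
  by_cases hcase : (1:ℝ)/2 ≤ s
  swap
  · push_neg at hcase
    have hrbig : (3:ℝ)/4 < r ^ 2 := by nlinarith [hs0]
    have h6 : (1:ℝ) ≤ 6 * |r| := by nlinarith [sq_abs r, abs_nonneg r]
    rw [abs_le]
    constructor <;> linarith
  have hmeas2 : Measurable fun p : ℝ × ℝ => r * p.1 + s * p.2 := by fun_prop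
  have hT : MeasurableSet {p : ℝ × ℝ | p.1 ≤ t1 ∧ r * p.1 + s * p.2 ≤ t2} :=
    (measurable_fst measurableSet_Iic).inter (hmeas2 measurableSet_Iic)
  have hmap : Measure.map (fun ω => (Z1 ω, Z2 ω)) P
      = (gaussianReal 0 1).prod (gaussianReal 0 1) := by
    have h := (indepFun_iff_map_prod_eq_prod_map_map hZ1.aemeasurable hZ2.aemeasurable).mp hindep
    rw [h, hlaw1, hlaw2]
  have hPev : P {ω | Z1 ω ≤ t1 ∧ r * Z1 ω + s * Z2 ω ≤ t2}
      = ((gaussianReal 0 1).prod (gaussianReal 0 1))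
          {p : ℝ × ℝ | p.1 ≤ t1 ∧ r * p.1 + s * p.2 ≤ t2} := by
    rw [← hmap, Measure.map_apply (hZ1.prodMk hZ2) hT]
    rfl
  set g : ℝ → ℝ := fun a => cdf (gaussianReal 0 1) ((t2 - r * a) / s) with hg
  have hgmeas : Measurable g :=
    ((cdf (gaussianReal 0 1)).mono.measurable).comp (by fun_prop)
  have hg01 : ∀ a : ℝ, 0 ≤ g a ∧ g a ≤ 1 := fun a => ⟨cdf_nonneg _ _, cdf_le_one _ _⟩
  have hprod : ((gaussianReal 0 1).prod (gaussianReal 0 1))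
        {p : ℝ × ℝ | p.1 ≤ t1 ∧ r * p.1 + s * p.2 ≤ t2}
      = ∫⁻ a, (Set.Iic t1).indicator (fun a => ENNReal.ofReal (g a)) a ∂(gaussianReal 0 1) := by
    rw [Measure.prod_apply hT]
    refine lintegral_congr fun a => ?_
    by_cases ha : a ≤ t1
    · have hset : (Prod.mk a ⁻¹' {p : ℝ × ℝ | p.1 ≤ t1 ∧ r * p.1 + s * p.2 ≤ t2})
          = Set.Iic ((t2 - r * a) / s) := by
        ext b
        simp only [Set.mem_preimage, Set.mem_setOf_eq, Set.mem_Iic, ha, true_and]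
        rw [le_div_iff₀ hs0, mul_comm]
        constructor <;> intro h <;> linarith
      rw [hset, Set.indicator_of_mem (Set.mem_Iic.mpr ha)]
      show (gaussianReal 0 1) (Set.Iic ((t2 - r * a) / s))
          = ENNReal.ofReal (cdf (gaussianReal 0 1) ((t2 - r * a) / s))
      rw [cdf_eq_real, measureReal_def, ENNReal.ofReal_toReal (measure_ne_top _ _)]
    · have hset : (Prod.mk a ⁻¹' {p : ℝ × ℝ | p.1 ≤ t1 ∧ r * p.1 + s * p.2 ≤ t2})
          = (∅ : Set ℝ) := by
        ext b; simp [ha]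
      rw [hset, Set.indicator_of_notMem (by simpa using ha), measure_empty]
  have hgint : Integrable g ((gaussianReal 0 1).restrict (Set.Iic t1)) := by
    refine Integrable.mono' (integrable_const 1) hgmeas.aestronglyMeasurable ?_
    exact Filter.Eventually.of_forall fun a => by
      rw [Real.norm_eq_abs, abs_of_nonneg (hg01 a).1]; exact (hg01 a).2
  have htoReal : (((gaussianReal 0 1).prod (gaussianReal 0 1))
        {p : ℝ × ℝ | p.1 ≤ t1 ∧ r * p.1 + s * p.2 ≤ t2}).toReal
      = ∫ a in Set.Iic t1, g a ∂(gaussianReal 0 1) := by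
    rw [hprod, lintegral_indicator measurableSet_Iic,
      ← ofReal_integral_eq_lintegral_ofReal hgint
        (Filter.Eventually.of_forall fun a => (hg01 a).1),
      ENNReal.toReal_ofReal (integral_nonneg fun a => (hg01 a).1)]
  have hconst : cdf (gaussianReal 0 1) t1 * cdf (gaussianReal 0 1) t2
      = ∫ _a in Set.Iic t1, cdf (gaussianReal 0 1) t2 ∂(gaussianReal 0 1) := by
    rw [setIntegral_const, smul_eq_mul, cdf_eq_real]
  have hpt : ∀ a : ℝ, |g a - cdf (gaussianReal 0 1) t2| ≤ |r| * |a| / s + (1 / s - 1) := by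
    intro a
    have heq : (t2 - r * a) / s - t2 / s = -(r * a) / s := by field_simp; ring
    have h1 : |g a - cdf (gaussianReal 0 1) (t2 / s)| ≤ |r * a| / s := by
      calc |g a - cdf (gaussianReal 0 1) (t2 / s)|
          ≤ |(t2 - r * a) / s - t2 / s| := mehler_cdf_lipschitz _ _
        _ = |r * a| / s := by rw [heq, abs_div, abs_neg, abs_of_pos hs0]
    have h2 : |cdf (gaussianReal 0 1) (t2 / s) - cdf (gaussianReal 0 1) t2| ≤ 1 / s - 1 :=
      mehler_cdf_scale hs0 hs1
    calc |g a - cdf (gaussianReal 0 1) t2|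
        ≤ |g a - cdf (gaussianReal 0 1) (t2 / s)|
            + |cdf (gaussianReal 0 1) (t2 / s) - cdf (gaussianReal 0 1) t2| := abs_sub_le _ _ _
      _ ≤ |r * a| / s + (1 / s - 1) := add_le_add h1 h2
      _ = |r| * |a| / s + (1 / s - 1) := by rw [abs_mul]
  have hmul : Integrable (fun a : ℝ => |r| * |a| / s) (gaussianReal 0 1) := by
    simpa [mul_div_assoc, div_eq_mul_inv, mul_comm, mul_left_comm] using
      ((mehler_integrable_abs.const_mul |r|).div_const s)
  have hdommeas : Integrable (fun a : ℝ => |r| * |a| / s + (1 / s - 1)) (gaussianReal 0 1) :=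
    hmul.add (integrable_const _)
  have hsubint : Integrable (fun a => |g a - cdf (gaussianReal 0 1) t2|) (gaussianReal 0 1) := by
    refine Integrable.mono' (integrable_const 2)
      ((hgmeas.sub measurable_const).abs).aestronglyMeasurable
      (Filter.Eventually.of_forall fun a => ?_)
    rw [Real.norm_eq_abs, abs_abs, abs_le]
    have h2 : (0:ℝ) ≤ cdf (gaussianReal 0 1) t2 := cdf_nonneg _ _
    have h3 : cdf (gaussianReal 0 1) t2 ≤ 1 := cdf_le_one _ _
    exact ⟨by linarith [(hg01 a).1], by linarith [(hg01 a).2]⟩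
  have hIabs : ∫ a : ℝ, |a| ∂(gaussianReal 0 1) ≤ 2 := mehler_integral_abs_le
  have hdiff : |(∫ a in Set.Iic t1, g a ∂(gaussianReal 0 1))
      - cdf (gaussianReal 0 1) t1 * cdf (gaussianReal 0 1) t2|
      ≤ 2 * |r| / s + (1 / s - 1) := by
    rw [hconst, ← integral_sub hgint (integrable_const _)]
    calc |∫ a in Set.Iic t1, (g a - cdf (gaussianReal 0 1) t2) ∂(gaussianReal 0 1)|
        ≤ ∫ a in Set.Iic t1, |g a - cdf (gaussianReal 0 1) t2| ∂(gaussianReal 0 1) := by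
          simpa [Real.norm_eq_abs] using
            norm_integral_le_integral_norm (μ := (gaussianReal 0 1).restrict (Set.Iic t1))
              (fun a => g a - cdf (gaussianReal 0 1) t2)
      _ ≤ ∫ a, |g a - cdf (gaussianReal 0 1) t2| ∂(gaussianReal 0 1) :=
          setIntegral_le_integral hsubint
            (Filter.Eventually.of_forall fun a => abs_nonneg _)
      _ ≤ ∫ a, (|r| * |a| / s + (1 / s - 1)) ∂(gaussianReal 0 1) :=
          integral_mono hsubint hdommeas hpt
      _ = (|r| / s) * (∫ a : ℝ, |a| ∂(gaussianReal 0 1)) + (1 / s - 1) := by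
          rw [integral_add hmul (integrable_const _), integral_const, probReal_univ,
            one_smul]
          congr 1
          rw [← integral_const_mul]
          congr 1; ext a; ring
      _ ≤ (|r| / s) * 2 + (1 / s - 1) := by
          have hnn : (0:ℝ) ≤ |r| / s := div_nonneg (abs_nonneg r) hs0.le
          have := mul_le_mul_of_nonneg_left hIabs hnn
          linarith
      _ = 2 * |r| / s + (1 / s - 1) := by ring
  rw [hPev, htoReal]
  have hone_div : 1 / s ≤ 2 := by rw [div_le_iff₀ hs0]; linarith
  have h4 : 1 / s - 1 ≤ 2 * |r| := by
    have h5 : 1 / s - 1 = (1 - s) / s := by field_simp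
    rw [h5]
    calc (1 - s) / s = (1 - s) * (1 / s) := by ring
      _ ≤ (1 - s) * 2 := mul_le_mul_of_nonneg_left hone_div (by linarith)
      _ ≤ r ^ 2 * 2 := by nlinarith
      _ ≤ 2 * |r| := by nlinarith [sq_abs r, abs_nonneg r]
  have h6 : 2 * |r| / s ≤ 4 * |r| := by
    rw [div_le_iff₀ hs0]; nlinarith [abs_nonneg r]
  linarith [hdiff]
end
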